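/- Let H be the Bernstein–Lusztig–Hecke algebra of a Kac-Moody root datum over a field F, with basis (Z^λ H_w)_{λ∈Y, w∈W}. For every θ ∈ F[Y] (the span of the Z^λ) and every w ∈ W, the commutation defect θ * H_w − H_w * θ^{w⁻¹} lies in the span of the H_v * F[Y] with v < w in the Bruhat order. In particular, for each w, the span of {H_v Z^λ : v ≤ w, λ ∈ Y} is a finitely generated left F[Y]-submodule. -/

import Mathlib

namespace StmtAux
open List CoxeterSystem

variable {B : Type*} {W : Type*} [Group W] {M : CoxeterMatrix B} (cs : CoxeterSystem M W)

local prefix:100 "σ" => cs.simple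
set_option linter.unusedSectionVars false
local prefix:100 "π" => cs.wordProd
local prefix:100 "ℒ" => cs.length

theorem ris_append (α β : List B) :
    cs.rightInvSeq (α ++ β) =
      (cs.rightInvSeq α).map (fun r => (π β)⁻¹ * r * π β) ++ cs.rightInvSeq β := by
  induction α with
  | nil => simp [rightInvSeq]
  | cons i α ih =>
      show cs.rightInvSeq (i :: (α ++ β)) = _
      rw [rightInvSeq, ih, rightInvSeq]
      simp only [map_cons, cons_append, wordProd_append, mul_inv_rev]
      congr 1
      group

theorem lis_eq_map_ris (ω : List B) :
    cs.leftInvSeq ω = (cs.rightInvSeq ω).map (fun r => π ω * r * (π ω)⁻¹) := by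
  induction ω with
  | nil => simp [leftInvSeq, rightInvSeq]
  | cons i ω ih =>
      rw [leftInvSeq, rightInvSeq, ih]
      simp only [map_cons, map_map, wordProd_cons, mul_inv_rev]
      congr 1
      · group
      · apply List.map_congr_left
        intro r _
        simp only [Function.comp_apply, MulAut.conj_apply]
        group

variable [DecidableEq W]

/-- The function underlying the sign permutation representation. -/
def etaFun (i : B) : W × ℤˣ → W × ℤˣ :=
  fun x => (σ i * x.1 * σ i, if x.1 = σ i then -x.2 else x.2)

theorem simple_conj_eq_iff (i : B) (w : W) : (σ i * w * σ i = σ i) ↔ w = σ i := by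
  constructor
  · intro h
    have h' : (σ i * w) * σ i = 1 * σ i := by rw [one_mul]; exact h
    have h'' := mul_right_cancel h'
    rw [mul_eq_one_iff_inv_eq] at h''
    rw [← h'', cs.inv_simple]
  · rintro rfl
    rw [cs.simple_mul_simple_self, one_mul]

theorem etaFun_involutive (i : B) : Function.Involutive (etaFun cs i) := by
  rintro ⟨w, ε⟩
  simp only [etaFun]
  have h1 : σ i * (σ i * w * σ i) * σ i = w := by
    rw [show σ i * (σ i * w * σ i) * σ i = (σ i * σ i) * w * (σ i * σ i) by group,
      cs.simple_mul_simple_self, one_mul, mul_one]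
  rw [Prod.mk.injEq]
  refine ⟨h1, ?_⟩
  by_cases hw : w = σ i
  · simp [hw, simple_conj_eq_iff cs, cs.simple_mul_simple_self]
  · simp only [simple_conj_eq_iff cs, hw, if_false]

/-- The sign permutation representation on the simple reflections. -/
def eta (i : B) : Equiv.Perm (W × ℤˣ) := Function.Involutive.toPerm _ (etaFun_involutive cs i)

/-- The permutation associated to a word. -/
def etaWord (ω : List B) : Equiv.Perm (W × ℤˣ) := (ω.map (eta cs)).prod

theorem etaWord_nil : etaWord cs [] = 1 := by simp [etaWord]

theorem etaWord_cons (i : B) (ω : List B) :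
    etaWord cs (i :: ω) = eta cs i * etaWord cs ω := by simp [etaWord]

theorem etaWord_append (α β : List B) :
    etaWord cs (α ++ β) = etaWord cs α * etaWord cs β := by
  simp [etaWord]

theorem etaWord_apply [DecidableEq W] (ω : List B) (w : W) (ε : ℤˣ) :
    etaWord cs ω (w, ε) =
      (π ω * w * (π ω)⁻¹, (-1 : ℤˣ) ^ ((cs.rightInvSeq ω).count w) * ε) := by
  induction ω with
  | nil => simp [etaWord_nil]
  | cons i ω ih =>
      rw [etaWord_cons]
      have : (eta cs i * etaWord cs ω) (w, ε) = eta cs i (etaWord cs ω (w, ε)) := rfl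
      rw [this, ih]
      show etaFun cs i _ = _
      rw [etaFun]
      have hcond : ((π ω)⁻¹ * σ i * π ω = w) ↔ (π ω * w * (π ω)⁻¹ = σ i) := by
        constructor
        · intro h; rw [← h]; group
        · intro h; rw [← h]; group
      rw [rightInvSeq]
      rw [List.count_cons]
      simp only [wordProd_cons, mul_inv_rev, beq_iff_eq]
      rw [Prod.mk.injEq]
      constructor
      · rw [cs.inv_simple]; group
      · by_cases hc : π ω * w * (π ω)⁻¹ = σ i
        · rw [if_pos hc, if_pos (by rw [hcond]; exact hc), pow_succ, mul_neg_one, neg_mul]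
        · rw [if_neg hc, if_neg (by rw [hcond]; exact hc), add_zero]

theorem simple_mul_pow_comm (i j : B) (k : ℕ) :
    σ j * (σ i * σ j) ^ k = ((σ i * σ j) ^ k)⁻¹ * σ j := by
  induction k with
  | zero => simp
  | succ k ih =>
      have hbase : σ j * (σ i * σ j) = (σ i * σ j)⁻¹ * σ j := by
        rw [mul_inv_rev, cs.inv_simple, cs.inv_simple]
        group
      calc σ j * (σ i * σ j) ^ (k+1) = σ j * (σ i * σ j) * (σ i * σ j) ^ k := by
            rw [pow_succ', ← mul_assoc]
        _ = (σ i * σ j)⁻¹ * (σ j * (σ i * σ j) ^ k) := by rw [hbase, mul_assoc]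
        _ = (σ i * σ j)⁻¹ * ((σ i * σ j) ^ k)⁻¹ * σ j := by rw [ih, ← mul_assoc]
        _ = ((σ i * σ j) ^ (k+1))⁻¹ * σ j := by simp only [pow_succ, mul_inv_rev, mul_assoc]

theorem wordProd_repJoin (i j : B) (m : ℕ) :
    π ((List.replicate m [i, j]).flatten) = (σ i * σ j) ^ m := by
  induction m with
  | zero => simp
  | succ m ih =>
      rw [List.replicate_succ, List.flatten_cons, wordProd_append, ih, pow_succ']
      congr 1
      simp [wordProd_cons]

theorem ris_repJoin (i j : B) (m : ℕ) :
    cs.rightInvSeq ((List.replicate m [i, j]).flatten) =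
      ((List.range (2 * m)).reverse).map (fun e => ((σ i * σ j) ^ e)⁻¹ * σ j) := by
  induction m with
  | zero => simp [rightInvSeq]
  | succ m ih =>
      rw [List.replicate_succ, List.flatten_cons]
      show cs.rightInvSeq (i :: j :: (List.replicate m [i, j]).flatten) = _
      rw [rightInvSeq, rightInvSeq, ih]
      have h2m : 2 * (m + 1) = (2 * m + 1) + 1 := by ring
      rw [h2m, List.range_succ, List.range_succ, List.reverse_append, List.reverse_append]
      simp only [List.reverse_singleton, List.singleton_append, List.cons_append, List.map_cons]
      have hπ := wordProd_repJoin cs i j m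
      congr 1
      · -- first entry
        rw [wordProd_cons, hπ]
        have hsjs : σ j * σ i * σ j = (σ i * σ j)⁻¹ * σ j := by
          rw [mul_inv_rev, cs.inv_simple, cs.inv_simple]
        have e1 : (σ j * (σ i * σ j) ^ m)⁻¹ * σ i * (σ j * (σ i * σ j) ^ m)
            = ((σ i * σ j) ^ m)⁻¹ * (σ j * σ i * σ j) * (σ i * σ j) ^ m := by
          rw [mul_inv_rev, cs.inv_simple]; group
        have e2 : ((σ i * σ j) ^ m)⁻¹ * ((σ i * σ j)⁻¹ * σ j) * (σ i * σ j) ^ m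
            = ((σ i * σ j) ^ m)⁻¹ * (σ i * σ j)⁻¹ * (σ j * (σ i * σ j) ^ m) := by
          group
        have e3 : (σ i * σ j) ^ (2 * m + 1) = (σ i * σ j) ^ m * (σ i * σ j) * (σ i * σ j) ^ m := by
          rw [← pow_succ, ← pow_add]; congr 1; ring
        rw [e1, hsjs, e2, simple_mul_pow_comm cs, e3, mul_inv_rev, mul_inv_rev]
        group
      · congr 1
        -- second entry
        rw [hπ, mul_assoc, simple_mul_pow_comm cs]
        have e4 : (σ i * σ j) ^ (2 * m) = (σ i * σ j) ^ m * (σ i * σ j) ^ m := by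
          rw [← pow_add]; congr 1; ring
        show _ = ((σ i * σ j) ^ (2 * m))⁻¹ * σ j
        rw [e4, mul_inv_rev, mul_assoc]

theorem count_ris_repJoin_even (i j : B) (hm : (σ i * σ j) ^ (M i j) = 1) (w : W) :
    Even ((cs.rightInvSeq ((List.replicate (M i j) [i, j]).flatten)).count w) := by
  rw [ris_repJoin]
  set m := M i j with hmdef
  set f : ℕ → W := fun e => ((σ i * σ j) ^ e)⁻¹ * σ j with hf
  rw [List.map_reverse, List.count_reverse]
  have h1 : List.range (2 * m) = List.range m ++ (List.range m).map (fun x => m + x) := by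
    rw [two_mul, List.range_add]
  rw [h1, List.map_append, List.map_map]
  have h2 : (List.range m).map (f ∘ fun x => m + x) = (List.range m).map f := by
    apply List.map_congr_left
    intro e _
    simp only [Function.comp_apply, hf]
    rw [pow_add, hm, one_mul]
  rw [h2, List.count_append]
  exact ⟨_, rfl⟩

theorem eta_liftable : M.IsLiftable (eta cs) := by
  intro i j
  have h1 : eta cs i * eta cs j = etaWord cs [i, j] := by
    simp [etaWord]
  have h2 : ∀ k : ℕ, (etaWord cs [i, j]) ^ k
      = etaWord cs ((List.replicate k [i, j]).flatten) := by
    intro k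
    induction k with
    | zero => simp [etaWord]
    | succ k ih =>
        rw [pow_succ', ih, List.replicate_succ, List.flatten_cons, etaWord_append]
  have hm : (σ i * σ j) ^ (M i j) = 1 := cs.simple_mul_simple_pow i j
  rw [h1, h2]
  apply Equiv.ext
  rintro ⟨w, ε⟩
  rw [etaWord_apply, wordProd_repJoin cs, hm]
  have he := count_ris_repJoin_even cs i j hm w
  rw [Even.neg_one_pow he]
  simp

/-- The sign representation of the Coxeter group. -/
def phi : W →* Equiv.Perm (W × ℤˣ) := cs.lift ⟨eta cs, eta_liftable cs⟩

theorem phi_wordProd (ω : List B) : phi cs (π ω) = etaWord cs ω := by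
  induction ω with
  | nil => simp [etaWord, phi]
  | cons i ω ih =>
      rw [wordProd_cons, map_mul, ih, etaWord_cons]
      congr 1
      exact cs.lift_apply_simple (eta_liftable cs) i

theorem count_ris_parity {ω ω' : List B} (h : π ω = π ω') (t : W) :
    (-1 : ℤˣ) ^ ((cs.rightInvSeq ω).count t) = (-1 : ℤˣ) ^ ((cs.rightInvSeq ω').count t) := by
  have h2 : etaWord cs ω (t, 1) = etaWord cs ω' (t, 1) := by
    rw [← phi_wordProd, ← phi_wordProd, h]
  rw [etaWord_apply, etaWord_apply] at h2
  have := congrArg Prod.snd h2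
  simpa using this

theorem odd_count_ris_palindrome (c : B) (μ : List B) :
    Odd ((cs.rightInvSeq (μ ++ [c] ++ μ.reverse)).count (π μ * σ c * (π μ)⁻¹)) := by
  set u := π μ with hu
  set t := u * σ c * u⁻¹ with ht
  have key : ∀ (G : W → W), Function.Injective G → G (σ c) = t →
      ∀ l : List W, (l.map G).count t = l.count (σ c) := by
    intro G hinj hGc l
    rw [← hGc]
    exact List.count_map_of_injective _ _ hinj _
  have hrev : π μ.reverse = u⁻¹ := cs.wordProd_reverse μ
  rw [ris_append cs (μ ++ [c]) μ.reverse, ris_append cs μ [c], hrev]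
  have hc : cs.rightInvSeq [c] = [σ c] := by
    show cs.rightInvSeq (c :: []) = [σ c]
    rw [rightInvSeq, rightInvSeq]
    simp
  rw [hc]
  rw [List.map_append, List.map_map, List.count_append, List.count_append]
  have conj_inj : ∀ a b : W, Function.Injective (fun r : W => a * r * b) := by
    intro a b x y h
    exact mul_left_cancel (mul_right_cancel h)
  have h3 := key _ ((conj_inj u⁻¹⁻¹ u⁻¹).comp (conj_inj (π [c])⁻¹ (π [c])))
    (by
      show u⁻¹⁻¹ * ((π [c])⁻¹ * σ c * π [c]) * u⁻¹ = t
      rw [cs.wordProd_singleton, ht]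
      simp [mul_assoc]) (cs.rightInvSeq μ)
  rw [h3]
  have h4 : (([σ c] : List W).map fun r => (π μ.reverse)⁻¹ * r * π μ.reverse).count t = 1 := by
    simp only [List.map_cons, List.map_nil, hrev]
    rw [show u⁻¹⁻¹ * σ c * u⁻¹ = t by rw [ht, inv_inv]]
    simp
  rw [show ((([σ c] : List W).map fun r => u⁻¹⁻¹ * r * u⁻¹)).count t = 1 from by
    simpa [hrev] using h4]
  have h5 : (cs.rightInvSeq μ.reverse).count t = (cs.rightInvSeq μ).count (σ c) := by
    rw [cs.rightInvSeq_reverse, List.count_reverse, lis_eq_map_ris cs]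
    exact key _ (fun a b hab => mul_left_cancel (mul_right_cancel hab))
      (by rw [← hu, ← ht]) (cs.rightInvSeq μ)
  rw [h5]
  exact ⟨(cs.rightInvSeq μ).count (σ c), by ring⟩

theorem mem_ris_of_isRightInversion {t w : W} (ht : cs.IsReflection t)
    (hlt : ℒ (w * t) < ℒ w) {ω : List B} (hred : cs.IsReduced ω) (hw : π ω = w) :
    t ∈ cs.rightInvSeq ω := by
  classical
  obtain ⟨u, c, htu⟩ := ht
  obtain ⟨μ, hμred, hμ⟩ := cs.exists_reduced_word' u
  obtain ⟨ν, hνred, hν⟩ := cs.exists_reduced_word' (w * t)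
  have htt : t * t = 1 := by
    rw [htu]
    rw [show u * σ c * u⁻¹ * (u * σ c * u⁻¹) = u * (σ c * σ c) * u⁻¹ by group,
      cs.simple_mul_simple_self, mul_one, mul_inv_cancel]
  set Ω := ν ++ (μ ++ [c] ++ μ.reverse) with hΩdef
  have hpal : π (μ ++ [c] ++ μ.reverse) = t := by
    rw [wordProd_append, wordProd_append, cs.wordProd_reverse, cs.wordProd_singleton, ← hμ, htu]
  have hΩ : π Ω = w := by
    rw [hΩdef, wordProd_append, hpal, ← hν]
    rw [show w * t * t = w * (t * t) by group, htt, mul_one]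
  have hparity := count_ris_parity cs (ω := ω) (ω' := Ω) (by rw [hw, hΩ]) t
  have hcount : (cs.rightInvSeq Ω).count t
      = (cs.rightInvSeq ν).count t + (cs.rightInvSeq (μ ++ [c] ++ μ.reverse)).count t := by
    rw [hΩdef, ris_append cs, List.count_append]
    congr 1
    have hinj : Function.Injective (fun r : W => (π (μ ++ [c] ++ μ.reverse))⁻¹ * r
        * π (μ ++ [c] ++ μ.reverse)) := by
      intro a b hab
      exact mul_left_cancel (mul_right_cancel hab)
    have := List.count_map_of_injective (cs.rightInvSeq ν) _ hinj t
    rw [show (π (μ ++ [c] ++ μ.reverse))⁻¹ * t * π (μ ++ [c] ++ μ.reverse)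
        = t by rw [hpal, inv_mul_cancel, one_mul]] at this
    exact this
  have hν0 : (cs.rightInvSeq ν).count t = 0 := by
    rw [List.count_eq_zero]
    intro hmem
    have := (cs.isRightInversion_of_mem_rightInvSeq hνred hmem).2
    rw [← hν, show w * t * t = w * (t * t) by group, htt, mul_one] at this
    omega
  have hodd : Odd ((cs.rightInvSeq Ω).count t) := by
    rw [hcount, hν0, zero_add]
    have := odd_count_ris_palindrome cs c μ
    rw [← hμ, ← htu] at this
    exact this
  by_contra hnotmem
  rw [List.count_eq_zero.mpr hnotmem, pow_zero, Odd.neg_one_pow hodd] at hparity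
  exact (by decide : (1 : ℤˣ) ≠ -1) hparity

theorem exchange_erase {t w : W} (ht : cs.IsReflection t) (hlt : ℒ (w * t) < ℒ w)
    {ω : List B} (hred : cs.IsReduced ω) (hw : π ω = w) :
    ∃ j, j < ω.length ∧ π (ω.eraseIdx j) = w * t := by
  have hmem := mem_ris_of_isRightInversion cs ht hlt hred hw
  obtain ⟨j, hj, hget⟩ := List.getElem_of_mem hmem
  have hj' : j < ω.length := by
    rwa [cs.length_rightInvSeq] at hj
  refine ⟨j, hj', ?_⟩
  have := cs.wordProd_mul_getD_rightInvSeq ω j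
  rw [List.getD_eq_getElem _ _ hj, hget, hw] at this
  exact this.symm

theorem exists_reduced_sublist (τ : List B) :
    ∃ ρ, ρ.Sublist τ ∧ cs.IsReduced ρ ∧ π ρ = π τ := by
  induction τ using List.reverseRecOn with
  | nil =>
      refine ⟨[], List.Sublist.refl _, ?_, rfl⟩
      show ℒ (π ([] : List B)) = ([] : List B).length
      simp
  | append_singleton γ c ih =>
      obtain ⟨ρ, hsub, hred, hπ⟩ := ih
      by_cases hr : cs.IsReduced (ρ ++ [c])
      · refine ⟨ρ ++ [c], hsub.append (List.Sublist.refl _), hr, ?_⟩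
        rw [wordProd_append, wordProd_append, hπ]
      · have hdich := cs.length_mul_simple (π ρ) c
        have hrlen : ℒ (π (ρ ++ [c])) = ℒ (π ρ * σ c) := by
          rw [wordProd_append, cs.wordProd_singleton]
        have hnotred : ℒ (π ρ * σ c) ≠ ρ.length + 1 := by
          intro h
          apply hr
          show ℒ (π (ρ ++ [c])) = (ρ ++ [c]).length
          rw [hrlen, h, List.length_append, List.length_singleton]
        have hdesc : ℒ (π ρ * σ c) < ℒ (π ρ) := by
          rcases hdich with h | h
          · exact absurd (by rw [h, hred]) hnotred
          · omega
        obtain ⟨j, hj, hπe⟩ := exchange_erase cs (cs.isReflection_simple c) hdesc hred rfl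
        refine ⟨ρ.eraseIdx j, ((ρ.eraseIdx_sublist j).trans hsub).trans
          (List.sublist_append_left γ [c]), ?_, ?_⟩
        · show ℒ (π (ρ.eraseIdx j)) = (ρ.eraseIdx j).length
          rw [hπe]
          have hlen := List.length_eraseIdx_add_one hj
          have hd := hdich.resolve_left (fun h => hnotred (by rw [h, hred]))
          have hρlen : ℒ (π ρ) = ρ.length := hred
          omega
        · rw [hπe, wordProd_append, cs.wordProd_singleton, hπ]

/-- A single step in the Bruhat order: multiply by a reflection, increasing length. -/
def bstep (x y : W) : Prop := ∃ t, cs.IsReflection t ∧ y = x * t ∧ ℒ x < ℒ y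

/-- The Bruhat order (as reflexive-transitive closure of `bstep`). -/
def ble (x y : W) : Prop := Relation.ReflTransGen (bstep cs) x y

theorem ble_length {x y : W} (h : ble cs x y) : x = y ∨ ℒ x < ℒ y := by
  induction h with
  | refl => exact Or.inl rfl
  | tail hchain hstep ih =>
      obtain ⟨t, ht, rfl, hlt⟩ := hstep
      right
      rcases ih with rfl | hlt2
      · exact hlt
      · omega

theorem ble_subword {v w : W} (h : ble cs v w) :
    ∀ ω : List B, cs.IsReduced ω → π ω = w →
      ∃ ρ, ρ.Sublist ω ∧ cs.IsReduced ρ ∧ π ρ = v := by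
  induction h with
  | refl =>
      intro ω hred hw
      exact ⟨ω, List.Sublist.refl _, hred, hw⟩
  | @tail b cfin hchain hstep ih =>
      intro ω hred hw
      obtain ⟨t, ht, rfl, hlt⟩ := hstep
      have hlt' : ℒ (b * t * t) < ℒ (b * t) := by
        rw [mul_assoc, ht.mul_self, mul_one]
        exact hlt
      obtain ⟨j, hj, hπe⟩ := exchange_erase cs ht hlt' hred hw
      rw [mul_assoc, ht.mul_self, mul_one] at hπe
      obtain ⟨ρb, hsubb, hredb, hπb⟩ := exists_reduced_sublist cs (ω.eraseIdx j)
      rw [hπe] at hπb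
      obtain ⟨ρ, hsub, hredρ, hπρ⟩ := ih ρb hredb hπb
      exact ⟨ρ, hsub.trans (hsubb.trans (ω.eraseIdx_sublist j)), hredρ, hπρ⟩

theorem lift_aux (n : ℕ)
    (h2 : ∀ ω : List B, cs.IsReduced ω → ω.length < n → ∀ ρ, ρ.Sublist ω →
      ble cs (π ρ) (π ω))
    (c : B) {u y : W} (huy : ble cs u y) (hasc : ℒ u < ℒ (u * σ c)) :
    ℒ y ≤ n → ble cs (u * σ c) (if ℒ y < ℒ (y * σ c) then y * σ c else y) := by
  induction huy with
  | refl =>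
      intro _
      rw [if_pos hasc]
      exact Relation.ReflTransGen.refl
  | @tail x y' hchain hstep ih =>
      intro hyn
      obtain ⟨t, ht, rfl, hlt⟩ := hstep
      have hxn : ℒ x ≤ n := le_of_lt (lt_of_lt_of_le hlt hyn)
      specialize ih hxn
      rcases cs.length_mul_simple x c with hxasc | hxdesc
      · rw [if_pos (by omega)] at ih
        rcases cs.length_mul_simple (x * t) c with hyasc | hydesc
        · rw [if_pos (by omega)]
          refine ih.tail ⟨σ c * t * σ c, ?_, ?_, by omega⟩
          · have := ht.conj (σ c)
            rwa [cs.inv_simple] at this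
          · rw [show x * σ c * (σ c * t * σ c) = x * (σ c * σ c) * t * σ c by group,
              cs.simple_mul_simple_self, mul_one]
        · rw [if_neg (by omega)]
          -- exchange argument : need ble (x * σ c) (x * t)
          obtain ⟨μ, hμred, hμ⟩ := cs.exists_reduced_word' (x * t * σ c)
          have hωred : cs.IsReduced (μ ++ [c]) := by
            show ℒ (π (μ ++ [c])) = (μ ++ [c]).length
            rw [wordProd_append, cs.wordProd_singleton, ← hμ,
              cs.simple_mul_simple_cancel_right]
            rw [List.length_append, List.length_singleton, ← hμred, ← hμ]
            omega
          have hωπ : π (μ ++ [c]) = x * t := by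
            rw [wordProd_append, cs.wordProd_singleton, ← hμ,
              cs.simple_mul_simple_cancel_right]
          have hinv : ℒ (x * t * t) < ℒ (x * t) := by
            rw [mul_assoc, ht.mul_self, mul_one]
            exact hlt
          obtain ⟨j, hj, hπe⟩ := exchange_erase cs ht hinv hωred hωπ
          rw [mul_assoc, ht.mul_self, mul_one] at hπe
          rcases Nat.lt_or_ge j μ.length with hjlt | hjge
          · rw [List.eraseIdx_append_of_lt_length hjlt [c]] at hπe
            have hxs : x * σ c = π (μ.eraseIdx j) := by
              rw [← hπe, wordProd_append, cs.wordProd_singleton,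
                cs.simple_mul_simple_cancel_right]
            have hμlen : μ.length < n := by
              have h1 : ℒ (π μ) = μ.length := hμred
              rw [← hμ] at h1
              omega
            have hmid : ble cs (x * σ c) (x * t) := by
              rw [hxs]
              refine ((h2 μ hμred hμlen _ (μ.eraseIdx_sublist j)).tail
                ⟨σ c, cs.isReflection_simple c, ?_, ?_⟩)
              · rw [← hμ, cs.simple_mul_simple_cancel_right]
              · rw [← hμ]
                omega
            exact ih.trans hmid
          · have hjeq : j = μ.length := by
              have := hj
              rw [List.length_append, List.length_singleton] at this
              omega
            have herase : (μ ++ [c]).eraseIdx j = μ := by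
              subst hjeq
              rw [List.eraseIdx_append_of_length_le (le_refl μ.length)]
              simp
            rw [herase] at hπe
            have hx : x * t * σ c * σ c = x * σ c := by rw [hμ, hπe]
            rw [cs.simple_mul_simple_cancel_right] at hx
            rw [hx]
            exact ih
      · rw [if_neg (by omega)] at ih
        rcases cs.length_mul_simple (x * t) c with hyasc | hydesc
        · rw [if_pos (by omega)]
          exact (ih.tail ⟨t, ht, rfl, hlt⟩).tail
            ⟨σ c, cs.isReflection_simple c, rfl, by omega⟩
        · rw [if_neg (by omega)]
          exact ih.tail ⟨t, ht, rfl, hlt⟩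

theorem bruhat_main : ∀ n : ℕ, ∀ ω : List B, cs.IsReduced ω → ω.length ≤ n →
    ∀ ρ : List B, ρ.Sublist ω → ble cs (π ρ) (π ω) := by
  intro n
  induction n using Nat.strong_induction_on with
  | _ n ihn =>
    intro ω hred hlen ρ hsub
    rcases List.eq_nil_or_concat ω with rfl | ⟨ω₁, c, rfl⟩
    · rw [List.sublist_nil.mp hsub]
      exact Relation.ReflTransGen.refl
    · rw [List.concat_eq_append] at hsub hred hlen ⊢
      have hπred : ℒ (π (ω₁ ++ [c])) = ω₁.length + 1 := by
        rw [hred, List.length_append, List.length_singleton]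
      have hπc : π (ω₁ ++ [c]) = π ω₁ * σ c := by
        rw [wordProd_append, cs.wordProd_singleton]
      have hred₁ : cs.IsReduced ω₁ := by
        show ℒ (π ω₁) = ω₁.length
        have h1 := cs.length_wordProd_le ω₁
        have h2 := cs.length_mul_le (π ω₁) (σ c)
        rw [cs.length_simple] at h2
        rw [hπc] at hπred
        omega
      have hasc : ℒ (π ω₁) < ℒ (π ω₁ * σ c) := by
        rw [hπc] at hπred
        rw [hπred, hred₁]
        omega
      have hlen₁ : ω₁.length < n := by
        rw [List.length_append, List.length_singleton] at hlen
        omega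
      have hstepup : bstep cs (π ω₁) (π (ω₁ ++ [c])) := by
        refine ⟨σ c, cs.isReflection_simple c, hπc, ?_⟩
        rw [hπc]
        exact hasc
      obtain ⟨ρ₁, ρ₂, rfl, hsub₁, hsub₂⟩ := List.sublist_append_iff.mp hsub
      have hb : ble cs (π ρ₁) (π ω₁) :=
        ihn ω₁.length hlen₁ ω₁ hred₁ le_rfl ρ₁ hsub₁
      rcases List.sublist_singleton.mp hsub₂ with rfl | rfl
      · rw [List.append_nil]
        exact hb.tail hstepup
      · have hρπ : π (ρ₁ ++ [c]) = π ρ₁ * σ c := by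
          rw [wordProd_append, cs.wordProd_singleton]
        rcases cs.length_mul_simple (π ρ₁) c with hva | hvd
        · -- ascent on the small side : use the lifting lemma
          have h2 : ∀ ω' : List B, cs.IsReduced ω' → ω'.length < n → ∀ ρ', ρ'.Sublist ω' →
              ble cs (π ρ') (π ω') := fun ω' hr hl ρ' hs => ihn ω'.length hl ω' hr le_rfl ρ' hs
          have hlift := lift_aux cs n h2 c hb (by omega)
            (y := π ω₁) (by rw [hred₁]; omega)
          rw [if_pos hasc] at hlift
          rw [hρπ, hπc]
          exact hlift
        · -- descent on the small side
          have hdown : bstep cs (π ρ₁ * σ c) (π ρ₁) := by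
            refine ⟨σ c, cs.isReflection_simple c, ?_, by omega⟩
            rw [cs.simple_mul_simple_cancel_right]
          rw [hρπ]
          exact ((Relation.ReflTransGen.single hdown).trans hb).tail hstepup

/-- The subword-characterised strict Bruhat order is equivalent to `v ≠ w ∧ ble`. -/
theorem ble_iff_subword {v w : W} :
    ble cs v w ↔ (∀ ω : List B, cs.IsReduced ω → π ω = w →
      ∃ ρ, ρ.Sublist ω ∧ cs.IsReduced ρ ∧ π ρ = v) := by
  constructor
  · exact fun h => ble_subword cs h
  · intro h
    obtain ⟨ω, hωred, hωπ⟩ := cs.exists_reduced_word' w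
    obtain ⟨ρ, hsub, hρred, hρπ⟩ := h ω hωred hωπ.symm
    have := bruhat_main cs ω.length ω hωred le_rfl ρ hsub
    rw [hρπ, ← hωπ] at this
    exact this

end StmtAux

/-- In the Bernstein–Lusztig–Hecke algebra `H` (an `F`-algebra with basis `(Z^λ H_w)`
satisfying the Bernstein–Lusztig relations), for every `θ ∈ F[Y]` and every `w`, the
commutation defect `θ * H_w − H_w * θ^{w⁻¹}` lies in `⊕_{v < w} H_v F[Y]` (Bruhat order);
in particular, the span of `{H_v Z^λ : v ≤ w}` is a finitely generated left `F[Y]`-module. -/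
theorem stmt11 {F : Type*} [Field F] {B W : Type*} [Group W] {M : CoxeterMatrix B}
    (cs : CoxeterSystem M W)
    {Y : Type*} [AddCommGroup Y] (act : W →* Multiplicative (AddAut Y))
    {H : Type*} [Ring H] [Algebra F H]
    (σ : B → Fˣ) (Z : Y → H) (T : W → H)
    (hind : LinearIndependent F (fun p : Y × W => Z p.1 * T p.2))
    (hspan : Submodule.span F (Set.range fun p : Y × W => Z p.1 * T p.2) = ⊤)
    (hT1 : T 1 = 1) (hZ0 : Z 0 = 1)
    (hBL2 : ∀ (i : B) (w : W), T (cs.simple i) * T w =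
      if cs.length (cs.simple i * w) = cs.length w + 1 then T (cs.simple i * w)
      else ((σ i : F) - (↑(σ i)⁻¹ : F)) • T w + T (cs.simple i * w))
    (hBL3 : ∀ lam mu : Y, Z lam * Z mu = Z (lam + mu))
    (hBL4 : ∀ (i : B) (lam : Y),
      T (cs.simple i) * Z lam - Z (Multiplicative.toAdd (act (cs.simple i)) lam) * T (cs.simple i)
        ∈ Submodule.span F (Set.range Z))
    (blt : W → W → Prop)
    (hblt : ∀ u w : W, blt u w ↔ (u ≠ w ∧
      ∀ ω : List B, cs.IsReduced ω → cs.wordProd ω = w →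
        ∃ ω' : List B, ω'.Sublist ω ∧ cs.IsReduced ω' ∧ cs.wordProd ω' = u))
    (c : Y →₀ F) (w : W) :
    ((c.sum fun lam a => a • Z lam) * T w
        - T w * (c.sum fun lam a => a • Z (Multiplicative.toAdd (act w⁻¹) lam))
      ∈ Submodule.span F {x : H | ∃ v lam, blt v w ∧ x = T v * Z lam}) ∧
    ∃ gens : Finset H,
      Submodule.span F {x : H | ∃ v lam, (v = w ∨ blt v w) ∧ x = T v * Z lam} =
      Submodule.span F
        {x : H | ∃ θ ∈ Submodule.span F (Set.range Z), ∃ g ∈ gens, x = θ * g} := by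
  classical
  clear hind hspan hZ0 hBL3
  set act : W → Y → Y := fun x lam => Multiplicative.toAdd (act x) lam with hactdef
  -- order bridge
  have hblt' : ∀ v u : W, blt v u ↔ (v ≠ u ∧ StmtAux.ble cs v u) := by
    intro v u
    rw [hblt, StmtAux.ble_iff_subword cs]
  have hblt_len : ∀ {v u : W}, blt v u → cs.length v < cs.length u := by
    intro v u h
    rw [hblt'] at h
    rcases StmtAux.ble_length cs h.2 with rfl | hlt
    · exact absurd rfl h.1
    · exact hlt
  have hble_len : ∀ {v u : W}, StmtAux.ble cs v u → cs.length v ≤ cs.length u := by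
    intro v u h
    rcases StmtAux.ble_length cs h with rfl | hlt
    · exact le_rfl
    · exact le_of_lt hlt
  -- basic order facts
  have fact1 : ∀ (w' : W) (i : B), cs.length (w' * cs.simple i) = cs.length w' + 1 →
      blt w' (w' * cs.simple i) := by
    intro w' i h
    rw [hblt']
    constructor
    · intro he
      rw [← he] at h
      omega
    · exact Relation.ReflTransGen.single ⟨cs.simple i, cs.isReflection_simple i, rfl, by omega⟩
  have fact2 : ∀ {v w' : W} (i : B), blt v w' → cs.length (w' * cs.simple i) = cs.length w' + 1 →
      blt v (w' * cs.simple i) := by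
    intro v w' i h hasc
    rw [hblt'] at h ⊢
    refine ⟨?_, h.2.tail ⟨cs.simple i, cs.isReflection_simple i, rfl, by omega⟩⟩
    intro he
    have := hble_len h.2
    rw [he] at this
    have h3 : cs.length v < cs.length w' := by
      rcases StmtAux.ble_length cs h.2 with rfl | hlt
      · exact absurd rfl h.1
      · exact hlt
    rw [he] at h3
    omega
  have fact3 : ∀ {v w' : W} (i : B), blt v w' → cs.length (w' * cs.simple i) = cs.length w' + 1 →
      blt (v * cs.simple i) (w' * cs.simple i) := by
    intro v w' i h hasc
    rw [hblt'] at h ⊢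
    obtain ⟨hne, hble⟩ := h
    constructor
    · intro he
      exact hne (mul_right_cancel he)
    · obtain ⟨ω, hred, hπ⟩ := cs.exists_reduced_word' w'
      obtain ⟨ρ, hsub, hρred, hρπ⟩ := StmtAux.ble_subword cs hble ω hred hπ.symm
      have hred2 : cs.IsReduced (ω ++ [i]) := by
        show cs.length (cs.wordProd (ω ++ [i])) = (ω ++ [i]).length
        rw [cs.wordProd_append, cs.wordProd_singleton, ← hπ, hasc, List.length_append,
          List.length_singleton]
        rw [hπ, hred]
      have := StmtAux.bruhat_main cs (ω ++ [i]).length (ω ++ [i]) hred2 le_rfl (ρ ++ [i])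
        (hsub.append (List.Sublist.refl _))
      rw [cs.wordProd_append, cs.wordProd_append, cs.wordProd_singleton, hρπ, ← hπ] at this
      exact this
  have fact4 : ∀ {x v u : W}, blt x v → StmtAux.ble cs v u → blt x u := by
    intro x v u h1 h2
    rw [hblt'] at h1 ⊢
    refine ⟨?_, h1.2.trans h2⟩
    intro he
    have ha := hblt_len (by rw [hblt']; exact h1)
    have hb := hble_len h2
    rw [he] at ha
    omega
  -- action facts
  have hact : ∀ (x y : W) (lam : Y), act x (act y lam) = act (x * y) lam := by
    intro x y lam
    simp only [hactdef, map_mul]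
    rfl
  have hact1 : ∀ lam : Y, act 1 lam = lam := by
    intro lam
    simp only [hactdef, map_one]
    rfl
  -- words and products of T
  have hTword : ∀ ω : List B, cs.IsReduced ω →
      T (cs.wordProd ω) = (ω.map (fun i => T (cs.simple i))).prod := by
    intro ω
    induction ω with
    | nil =>
        intro _
        rw [cs.wordProd_nil, hT1, List.map_nil, List.prod_nil]
    | cons i ω ih =>
        intro hred
        have hred' : cs.IsReduced ω := by
          have := hred.drop 1
          simpa using this
        have hlen : cs.length (cs.simple i * cs.wordProd ω) = cs.length (cs.wordProd ω) + 1 := by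
          have h1 : cs.length (cs.wordProd (i :: ω)) = ω.length + 1 := by
            rw [hred]
            simp
          rw [← cs.wordProd_cons, h1, hred']
        have hb := hBL2 i (cs.wordProd ω)
        rw [if_pos hlen] at hb
        rw [cs.wordProd_cons, ← hb, ih hred', List.map_cons, List.prod_cons]
  have hTasc : ∀ (u : W) (i : B), cs.length (u * cs.simple i) = cs.length u + 1 →
      T u * T (cs.simple i) = T (u * cs.simple i) := by
    intro u i h
    obtain ⟨ω, hred, hπ⟩ := cs.exists_reduced_word' u
    have hred2 : cs.IsReduced (ω ++ [i]) := by
      show cs.length (cs.wordProd (ω ++ [i])) = (ω ++ [i]).length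
      rw [cs.wordProd_append, cs.wordProd_singleton, ← hπ, h, List.length_append,
        List.length_singleton, hπ, hred]
    have e := hTword (ω ++ [i]) hred2
    rw [cs.wordProd_append, cs.wordProd_singleton, ← hπ, List.map_append, List.prod_append] at e
    rw [e, ← hTword ω hred, ← hπ]
    simp
  have hTsq : ∀ i : B, T (cs.simple i) * T (cs.simple i)
      = ((σ i : F) - (↑(σ i)⁻¹ : F)) • T (cs.simple i) + 1 := by
    intro i
    have hb := hBL2 i (cs.simple i)
    rw [if_neg (by rw [cs.simple_mul_simple_self, cs.length_one, cs.length_simple]; omega)] at hb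
    rw [hb, cs.simple_mul_simple_self, hT1]
  have hTdesc : ∀ (u : W) (i : B), cs.length (u * cs.simple i) + 1 = cs.length u →
      T u * T (cs.simple i)
        = ((σ i : F) - (↑(σ i)⁻¹ : F)) • T u + T (u * cs.simple i) := by
    intro u i h
    have h2 : T (u * cs.simple i) * T (cs.simple i) = T u := by
      have := hTasc (u * cs.simple i) i (by rw [cs.simple_mul_simple_cancel_right]; omega)
      rwa [cs.simple_mul_simple_cancel_right] at this
    calc T u * T (cs.simple i)
        = T (u * cs.simple i) * (T (cs.simple i) * T (cs.simple i)) := by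
          rw [← mul_assoc, h2]
      _ = ((σ i : F) - (↑(σ i)⁻¹ : F)) • T u + T (u * cs.simple i) := by
          rw [hTsq i, mul_add, mul_one, mul_smul_comm, h2]
  -- rearranged Bernstein–Lusztig commutation
  have hZT : ∀ (i : B) (lam : Y), ∃ q ∈ Submodule.span F (Set.range Z),
      Z lam * T (cs.simple i) = T (cs.simple i) * Z (act (cs.simple i) lam) - q := by
    intro i lam
    refine ⟨_, hBL4 i (act (cs.simple i) lam), ?_⟩
    have hzz : Z (act (cs.simple i) (act (cs.simple i) lam)) = Z lam := by
      rw [hact, cs.simple_mul_simple_self, hact1]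
    rw [hzz, sub_sub_cancel]
  -- multiplying span elements
  have hTq : ∀ (v u : W), blt v u → ∀ q ∈ Submodule.span F (Set.range Z),
      T v * q ∈ Submodule.span F {x : H | ∃ v' lam, blt v' u ∧ x = T v' * Z lam} := by
    intro v u hv q hq
    refine Submodule.span_induction ?_ ?_ ?_ ?_ hq
    · rintro x ⟨lam, rfl⟩
      exact Submodule.subset_span ⟨v, lam, hv, rfl⟩
    · rw [mul_zero]
      exact Submodule.zero_mem _
    · intro x y _ _ hx hy
      rw [mul_add]
      exact Submodule.add_mem _ hx hy
    · intro a x _ hx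
      rw [mul_smul_comm]
      exact Submodule.smul_mem _ a hx
  -- the key inductive commutation lemma
  have Q : ∀ (n : ℕ) (u : W), cs.length u ≤ n → ∀ lam : Y,
      Z lam * T u - T u * Z (act u⁻¹ lam)
        ∈ Submodule.span F {x : H | ∃ v lam', blt v u ∧ x = T v * Z lam'} := by
    intro n
    induction n with
    | zero =>
        intro u hu lam
        have hu1 : u = 1 := cs.length_eq_zero_iff.mp (Nat.le_zero.mp hu)
        subst hu1
        rw [hT1, inv_one, hact1, mul_one, one_mul, sub_self]
        exact Submodule.zero_mem _
    | succ n ihn =>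
        intro u hu lam
        rcases Nat.lt_or_ge (cs.length u) (n + 1) with hlt | hge
        · exact ihn u (by omega) lam
        · have hlen : cs.length u = n + 1 := by omega
          -- decompose u = u' * s i
          obtain ⟨ω, hred, hπ⟩ := cs.exists_reduced_word' u
          rcases List.eq_nil_or_concat ω with rfl | ⟨ω₁, i, rfl⟩
          · rw [cs.wordProd_nil] at hπ
            rw [hπ, cs.length_one] at hlen
            omega
          · rw [List.concat_eq_append] at hπ hred
            set u' := cs.wordProd ω₁ with hu'
            have hπ2 : u = u' * cs.simple i := by
              rw [hπ, cs.wordProd_append, cs.wordProd_singleton]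
            have hωlen : (ω₁ ++ [i]).length = n + 1 := by
              rw [← hred, ← hπ, hlen]
            have hred₁ : cs.IsReduced ω₁ := by
              show cs.length (cs.wordProd ω₁) = ω₁.length
              have h1 := cs.length_wordProd_le ω₁
              have h2 := cs.length_mul_le u' (cs.simple i)
              rw [cs.length_simple] at h2
              rw [← hπ2] at h2
              rw [List.length_append, List.length_singleton] at hωlen
              rw [← hu'] at h1 ⊢
              omega
            have hlenu' : cs.length u' = n := by
              rw [hu', hred₁]
              rw [List.length_append, List.length_singleton] at hωlen
              omega
            have hasc : cs.length (u' * cs.simple i) = cs.length u' + 1 := by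
              rw [← hπ2, hlen, hlenu']
            -- now the computation
            obtain ⟨q, hq, hzts⟩ := hZT i (act u'⁻¹ lam)
            have ih := ihn u' (by omega) lam
            have hactu : act (cs.simple i) (act u'⁻¹ lam) = act u⁻¹ lam := by
              rw [hact, hπ2, mul_inv_rev, cs.inv_simple]
            have e1 : T u = T u' * T (cs.simple i) := by
              rw [hπ2, ← hTasc u' i hasc]
            have key : Z lam * T u - T u * Z (act u⁻¹ lam)
                = (Z lam * T u' - T u' * Z (act u'⁻¹ lam)) * T (cs.simple i)
                  - T u' * q := by
              have e2 : (Z lam * T u' - T u' * Z (act u'⁻¹ lam)) * T (cs.simple i) - T u' * q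
                  = Z lam * (T u' * T (cs.simple i))
                    - T u' * (Z (act u'⁻¹ lam) * T (cs.simple i) + q) := by
                noncomm_ring
              rw [e2, hzts, sub_add_cancel, hactu, e1]
              noncomm_ring
            rw [key]
            apply Submodule.sub_mem
            · -- (defect at u') * T (s i)
              have hmem : ∀ x ∈ Submodule.span F
                  {x : H | ∃ v lam', blt v u' ∧ x = T v * Z lam'},
                  x * T (cs.simple i) ∈ Submodule.span F
                    {x : H | ∃ v lam', blt v u ∧ x = T v * Z lam'} := by
                intro x hx
                refine Submodule.span_induction ?_ ?_ ?_ ?_ hx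
                · rintro x ⟨v, lam', hv, rfl⟩
                  obtain ⟨q₂, hq₂, hzts₂⟩ := hZT i lam'
                  rw [mul_assoc, hzts₂, mul_sub, ← mul_assoc]
                  apply Submodule.sub_mem
                  · rcases cs.length_mul_simple v i with hva | hvd
                    · rw [hTasc v i hva]
                      refine Submodule.subset_span ⟨v * cs.simple i, _, ?_, rfl⟩
                      rw [hπ2]
                      exact fact3 i hv hasc
                    · rw [hTdesc v i hvd, add_mul, smul_mul_assoc]
                      apply Submodule.add_mem
                      · apply Submodule.smul_mem
                        refine Submodule.subset_span ⟨v, _, ?_, rfl⟩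
                        rw [hπ2]
                        exact fact2 i hv hasc
                      · refine Submodule.subset_span ⟨v * cs.simple i, _, ?_, rfl⟩
                        rw [hπ2]
                        exact fact3 i hv hasc
                  · apply hTq
                    · rw [hπ2]
                      exact fact2 i hv hasc
                    · exact hq₂
                · rw [zero_mul]
                  exact Submodule.zero_mem _
                · intro x y _ _ hx hy
                  rw [add_mul]
                  exact Submodule.add_mem _ hx hy
                · intro a x _ hx
                  rw [smul_mul_assoc]
                  exact Submodule.smul_mem _ a hx
              exact hmem _ ih
            · apply hTq
              · rw [hπ2]
                exact fact1 u' i hasc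
              · exact hq
  constructor
  · -- part 1
    have hsum : (c.sum fun lam a => a • Z lam) * T w
        - T w * (c.sum fun lam a => a • Z (act w⁻¹ lam))
        = c.sum fun lam a => a • (Z lam * T w - T w * Z (act w⁻¹ lam)) := by
      rw [Finsupp.sum_mul, Finsupp.mul_sum, ← Finsupp.sum_sub]
      congr 1
      ext lam a
      rw [smul_mul_assoc, mul_smul_comm, smul_sub]
    rw [hsum, Finsupp.sum]
    apply Submodule.sum_mem
    intro lam _
    exact Submodule.smul_mem _ _ (Q (cs.length w) w le_rfl lam)
  · -- part 2 : finite generation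
    obtain ⟨ω₀, hω₀red, hω₀π⟩ := cs.exists_reduced_word' w
    set gens : Finset H := (ω₀.sublists.map (fun ρ => T (cs.wordProd ρ))).toFinset with hgensdef
    refine ⟨gens, ?_⟩
    have hgens1 : ∀ v : W, StmtAux.ble cs v w → T v ∈ gens := by
      intro v hv
      obtain ⟨ρ, hsub, hρred, hρπ⟩ := StmtAux.ble_subword cs hv ω₀ hω₀red hω₀π.symm
      rw [hgensdef, List.mem_toFinset, List.mem_map]
      exact ⟨ρ, List.mem_sublists.mpr hsub, by rw [hρπ]⟩
    have hgens2 : ∀ g ∈ gens, ∃ u, StmtAux.ble cs u w ∧ g = T u := by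
      intro g hg
      rw [hgensdef, List.mem_toFinset, List.mem_map] at hg
      obtain ⟨ρ, hρ, rfl⟩ := hg
      refine ⟨cs.wordProd ρ, ?_, rfl⟩
      have := StmtAux.bruhat_main cs ω₀.length ω₀ hω₀red le_rfl ρ (List.mem_sublists.mp hρ)
      rwa [← hω₀π] at this
    have R : ∀ (n : ℕ) (v : W), cs.length v ≤ n → StmtAux.ble cs v w → ∀ lam : Y,
        T v * Z lam ∈ Submodule.span F
          {x : H | ∃ θ ∈ Submodule.span F (Set.range Z), ∃ g ∈ gens, x = θ * g} := by
      intro n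
      induction n using Nat.strong_induction_on with
      | _ n ihn =>
        intro v hv hble lam
        have hTv : T v ∈ gens := hgens1 v hble
        have hQv := Q (cs.length v) v le_rfl (act v lam)
        have hcc : act v⁻¹ (act v lam) = lam := by rw [hact, inv_mul_cancel, hact1]
        rw [hcc] at hQv
        have hTvZ : T v * Z lam
            = Z (act v lam) * T v - (Z (act v lam) * T v - T v * Z lam) := by
          rw [sub_sub_cancel]
        rw [hTvZ]
        apply Submodule.sub_mem
        · exact Submodule.subset_span
            ⟨Z (act v lam), Submodule.subset_span ⟨_, rfl⟩, T v, hTv, rfl⟩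
        · refine Submodule.span_le.mpr ?_ hQv
          rintro x ⟨x', lam', hx', rfl⟩
          have hlt : cs.length x' < n := lt_of_lt_of_le (hblt_len hx') hv
          exact ihn (cs.length x') hlt x' le_rfl
            (((hblt' x' v).mp hx').2.trans hble) lam'
    apply le_antisymm
    · apply Submodule.span_le.mpr
      rintro x ⟨v, lam, hvw, rfl⟩
      have hble : StmtAux.ble cs v w := by
        rcases hvw with rfl | hlt
        · exact Relation.ReflTransGen.refl
        · exact ((hblt' v w).mp hlt).2
      exact R (cs.length v) v le_rfl hble lam
    · apply Submodule.span_le.mpr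
      rintro x ⟨θ, hθ, g, hg, rfl⟩
      obtain ⟨u, hu, rfl⟩ := hgens2 g hg
      simp only [SetLike.mem_coe]
      refine Submodule.span_induction ?_ ?_ ?_ ?_ hθ
      · rintro x ⟨lam, rfl⟩
        have hsplit : Z lam * T u
            = T u * Z (act u⁻¹ lam) + (Z lam * T u - T u * Z (act u⁻¹ lam)) := by
          rw [add_sub_cancel]
        rw [hsplit]
        apply Submodule.add_mem
        · refine Submodule.subset_span ⟨u, act u⁻¹ lam, ?_, rfl⟩
          rcases eq_or_ne u w with rfl | hne
          · exact Or.inl rfl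
          · exact Or.inr ((hblt' u w).mpr ⟨hne, hu⟩)
        · have hQu := Q (cs.length u) u le_rfl lam
          refine Submodule.span_le.mpr ?_ hQu
          rintro x ⟨x', lam', hx', rfl⟩
          exact Submodule.subset_span ⟨x', lam', Or.inr (fact4 hx' hu), rfl⟩
      · rw [zero_mul]
        exact Submodule.zero_mem _
      · intro x y _ _ hx hy
        rw [add_mul]
        exact Submodule.add_mem _ hx hy
      · intro a x _ hx
        rw [smul_mul_assoc]
        exact Submodule.smul_mem _ a hx
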